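/- Let (x_n)_{n≥1} be a sequence of real numbers converging to a real number x, and let k > 1 be a real number. If the limit lim_{n→∞} n^k (x_n − x_{n+1}) = l exists in ℝ, then the limit lim_{n→∞} n^{k−1} (x_n − x) exists and equals l/(k−1). -/

import Mathlib

open Filter Topology

/-- Key MVT estimate: for `0 < a` and `1 < k`,
`(k-1) * (a+1)^(-k) ≤ a^(1-k) - (a+1)^(1-k) ≤ (k-1) * a^(-k)`. -/
lemma rpow_key_estimate (k : ℝ) (hk : 1 < k) {a : ℝ} (ha : 0 < a) :
    (k - 1) * (a + 1) ^ (-k) ≤ a ^ (1 - k) - (a + 1) ^ (1 - k) ∧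
      a ^ (1 - k) - (a + 1) ^ (1 - k) ≤ (k - 1) * a ^ (-k) := by
  have hab : a < a + 1 := by linarith
  obtain ⟨c, hc, hceq⟩ := exists_hasDerivAt_eq_slope (fun t : ℝ => t ^ (1 - k))
    (fun t : ℝ => (1 - k) * t ^ (-k)) hab
    (fun t ht => by
      have ht0 : (0:ℝ) < t := lt_of_lt_of_le ha ht.1
      exact (Real.continuousAt_rpow_const t (1 - k) (Or.inl (ne_of_gt ht0))).continuousWithinAt)
    (fun t ht => by
      have ht0 : (0:ℝ) < t := lt_trans ha ht.1
      have h := Real.hasDerivAt_rpow_const (x := t) (p := 1 - k) (Or.inl (ne_of_gt ht0))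
      have : (1 - k) * t ^ (1 - k - 1) = (1 - k) * t ^ (-k) := by
        congr 1
        ring_nf
      rwa [this] at h)
  have hc0 : 0 < c := lt_trans ha hc.1
  have hsimp : (a + 1) - a = (1:ℝ) := by ring
  rw [hsimp, div_one] at hceq
  have heq : a ^ (1 - k) - (a + 1) ^ (1 - k) = (k - 1) * c ^ (-k) := by
    linarith [hceq]
  have h1 : c ^ (-k) ≤ a ^ (-k) :=
    Real.rpow_le_rpow_of_nonpos ha hc.1.le (by linarith)
  have h2 : (a + 1) ^ (-k) ≤ c ^ (-k) :=
    Real.rpow_le_rpow_of_nonpos hc0 hc.2.le (by linarith)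
  have hk1 : (0:ℝ) < k - 1 := by linarith
  constructor
  · rw [heq]
    exact mul_le_mul_of_nonneg_left h2 hk1.le
  · rw [heq]
    exact mul_le_mul_of_nonneg_left h1 hk1.le

set_option maxHeartbeats 1000000 in
theorem cesaro_stolz_rate (x : ℕ → ℝ) (X : ℝ) (k : ℝ) (hk : 1 < k) (l : ℝ)
    (hx : Tendsto x atTop (𝓝 X))
    (hl : Tendsto (fun n : ℕ => (n : ℝ) ^ k * (x n - x (n + 1))) atTop (𝓝 l)) :
    Tendsto (fun n : ℕ => (n : ℝ) ^ (k - 1) * (x n - X)) atTop (𝓝 (l / (k - 1))) := by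
  have hK : (0:ℝ) < k - 1 := by linarith
  have hnat : Tendsto (fun n : ℕ => (n : ℝ)) atTop atTop := tendsto_natCast_atTop_atTop
  have hnm1 : Tendsto (fun n : ℕ => (n : ℝ) - 1) atTop atTop := by
    have := tendsto_atTop_add_const_right atTop (-1 : ℝ) hnat
    simpa [sub_eq_add_neg] using this
  -- M ^ (1 - k) → 0
  have hM0 : Tendsto (fun M : ℕ => (M : ℝ) ^ (1 - k)) atTop (𝓝 0) := by
    have h := (tendsto_rpow_neg_atTop hK).comp hnat
    have hfun : (fun M : ℕ => (M : ℝ) ^ (-(k - 1))) = fun M : ℕ => (M : ℝ) ^ (1 - k) := by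
      funext M; rw [neg_sub]
    simpa [Function.comp_def, hfun] using h
  -- n/(n-1) → 1
  have hdiv : Tendsto (fun n : ℕ => (n : ℝ) / ((n : ℝ) - 1)) atTop (𝓝 1) := by
    have h0 : Tendsto (fun n : ℕ => 1 + ((n : ℝ) - 1)⁻¹) atTop (𝓝 (1 + 0)) :=
      tendsto_const_nhds.add (tendsto_inv_atTop_zero.comp hnm1)
    rw [add_zero] at h0
    refine h0.congr' ?_
    filter_upwards [eventually_ge_atTop 2] with n hn
    have hn2 : (2:ℝ) ≤ (n : ℝ) := by exact_mod_cast hn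
    have hne : (n : ℝ) - 1 ≠ 0 := by linarith
    field_simp
    ring
  -- B: n^(k-1) * (n-1)^(1-k) → 1
  have hB : Tendsto (fun n : ℕ => (n : ℝ) ^ (k - 1) * ((n : ℝ) - 1) ^ (1 - k)) atTop (𝓝 1) := by
    have hc : ContinuousAt (fun y : ℝ => y ^ (k - 1)) 1 :=
      Real.continuousAt_rpow_const 1 (k - 1) (Or.inl one_ne_zero)
    have h := hc.tendsto.comp hdiv
    rw [Real.one_rpow] at h
    refine h.congr' ?_
    filter_upwards [eventually_ge_atTop 2] with n hn
    have hn2 : (2:ℝ) ≤ (n : ℝ) := by exact_mod_cast hn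
    have h0 : (0:ℝ) < (n : ℝ) - 1 := by linarith
    have hn0 : (0:ℝ) ≤ (n : ℝ) := by linarith
    simp only [Function.comp]
    rw [Real.div_rpow hn0 h0.le, div_eq_mul_inv, ← Real.rpow_neg h0.le, neg_sub]
  -- A: n^(k-1) * (n-1)^(-k) → 0
  have hA : Tendsto (fun n : ℕ => (n : ℝ) ^ (k - 1) * ((n : ℝ) - 1) ^ (-k)) atTop (𝓝 0) := by
    have h := hB.mul (tendsto_inv_atTop_zero.comp hnm1)
    rw [one_mul] at h
    refine h.congr' ?_
    filter_upwards [eventually_ge_atTop 2] with n hn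
    have hn2 : (2:ℝ) ≤ (n : ℝ) := by exact_mod_cast hn
    have h0 : (0:ℝ) < (n : ℝ) - 1 := by linarith
    simp only [Function.comp]
    rw [mul_assoc]
    congr 1
    rw [show -k = (1 - k) + (-1) by ring, Real.rpow_add h0, Real.rpow_neg_one]
  rw [Metric.tendsto_atTop]
  intro ε hε
  set ε' : ℝ := ε * (k - 1) / 4 with hε'def
  have hε'pos : 0 < ε' := by positivity
  obtain ⟨N₁, hN₁⟩ := Metric.tendsto_atTop.mp hl ε' hε'pos
  have hAev : ∀ᶠ n : ℕ in atTop, |l| * ((n : ℝ) ^ (k - 1) * ((n : ℝ) - 1) ^ (-k)) < ε / 4 := by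
    have h := hA.const_mul |l|
    rw [mul_zero] at h
    exact h.eventually_lt_const (by positivity)
  have hBev : ∀ᶠ n : ℕ in atTop, (n : ℝ) ^ (k - 1) * ((n : ℝ) - 1) ^ (1 - k) < 2 :=
    hB.eventually_lt_const one_lt_two
  have hev : ∀ᶠ n : ℕ in atTop,
      dist ((n : ℝ) ^ (k - 1) * (x n - X)) (l / (k - 1)) < ε := by
    filter_upwards [eventually_ge_atTop 2, eventually_ge_atTop N₁, hAev, hBev]
      with n h2 hN1 hAe hBe
    have hn2 : (2:ℝ) ≤ (n : ℝ) := by exact_mod_cast h2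
    have hn0 : (0:ℝ) < (n : ℝ) := by linarith
    have hn1 : (0:ℝ) < (n : ℝ) - 1 := by linarith
    -- error bound
    set E : ℝ := |l| * ((n : ℝ) - 1) ^ (-k) + ε' * (((n : ℝ) - 1) ^ (1 - k) / (k - 1)) with hEdef
    -- Step 1: for all M ≥ n
    have step1 : ∀ M : ℕ, n ≤ M →
        |x n - x M - l * (((n : ℝ) ^ (1 - k) - (M : ℝ) ^ (1 - k)) / (k - 1))| ≤ E := by
      intro M hnM
      set S : ℝ := ∑ m ∈ Finset.Ico n M, (m : ℝ) ^ (-k) with hSdef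
      -- telescoping for x
      have htelx : ∑ m ∈ Finset.Ico n M, (x m - x (m + 1)) = x n - x M := by
        rw [Finset.sum_Ico_eq_sub _ hnM, Finset.sum_range_sub' x, Finset.sum_range_sub' x]
        ring
      -- telescoping for f m = m^(1-k)
      have htel1 : ∑ m ∈ Finset.Ico n M, ((m : ℝ) ^ (1 - k) - ((m : ℝ) + 1) ^ (1 - k))
          = (n : ℝ) ^ (1 - k) - (M : ℝ) ^ (1 - k) := by
        have := Finset.sum_Ico_eq_sub (fun m : ℕ => (m : ℝ) ^ (1 - k) - ((m : ℕ) + 1 : ℕ) ^ (1 - k)) hnM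
        rw [Finset.sum_range_sub' (fun m : ℕ => (m : ℝ) ^ (1 - k)),
            Finset.sum_range_sub' (fun m : ℕ => (m : ℝ) ^ (1 - k))] at this
        have hcast : ∀ m : ℕ, ((m : ℝ) + 1) ^ (1 - k) = (((m + 1 : ℕ) : ℝ)) ^ (1 - k) := by
          intro m; push_cast; ring_nf
        calc ∑ m ∈ Finset.Ico n M, ((m : ℝ) ^ (1 - k) - ((m : ℝ) + 1) ^ (1 - k))
            = ∑ m ∈ Finset.Ico n M, ((m : ℝ) ^ (1 - k) - (((m + 1 : ℕ) : ℝ)) ^ (1 - k)) := by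
              refine Finset.sum_congr rfl fun m _ => by rw [hcast]
          _ = (n : ℝ) ^ (1 - k) - (M : ℝ) ^ (1 - k) := by
              rw [this]; ring
      -- telescoping for f m = (m-1)^(1-k)
      have htel2 : ∑ m ∈ Finset.Ico n M, (((m : ℝ) - 1) ^ (1 - k) - (m : ℝ) ^ (1 - k))
          = ((n : ℝ) - 1) ^ (1 - k) - ((M : ℝ) - 1) ^ (1 - k) := by
        have := Finset.sum_Ico_eq_sub
          (fun m : ℕ => ((m : ℝ) - 1) ^ (1 - k) - (((m + 1 : ℕ) : ℝ) - 1) ^ (1 - k)) hnM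
        rw [Finset.sum_range_sub' (fun m : ℕ => ((m : ℝ) - 1) ^ (1 - k)),
            Finset.sum_range_sub' (fun m : ℕ => ((m : ℝ) - 1) ^ (1 - k))] at this
        have hcast : ∀ m : ℕ, (((m + 1 : ℕ) : ℝ) - 1) ^ (1 - k) = (m : ℝ) ^ (1 - k) := by
          intro m; push_cast; ring_nf
        calc ∑ m ∈ Finset.Ico n M, (((m : ℝ) - 1) ^ (1 - k) - (m : ℝ) ^ (1 - k))
            = ∑ m ∈ Finset.Ico n M,
                (((m : ℝ) - 1) ^ (1 - k) - (((m + 1 : ℕ) : ℝ) - 1) ^ (1 - k)) := by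
              refine Finset.sum_congr rfl fun m _ => by rw [hcast]
          _ = ((n : ℝ) - 1) ^ (1 - k) - ((M : ℝ) - 1) ^ (1 - k) := by
              rw [this]; ring
      -- pointwise facts for m ∈ Ico n M
      have hmem : ∀ m ∈ Finset.Ico n M, 2 ≤ m ∧ N₁ ≤ m := by
        intro m hm
        have := (Finset.mem_Ico.mp hm).1
        exact ⟨le_trans h2 this, le_trans hN1 this⟩
      -- lower sum bound: n^(1-k) - M^(1-k) ≤ (k-1) * S
      have hS_low : (n : ℝ) ^ (1 - k) - (M : ℝ) ^ (1 - k) ≤ (k - 1) * S := by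
        rw [← htel1, hSdef, Finset.mul_sum]
        refine Finset.sum_le_sum fun m hm => ?_
        have hm2 : (2:ℝ) ≤ (m : ℝ) := by exact_mod_cast (hmem m hm).1
        have hm0 : (0:ℝ) < (m : ℝ) := by linarith
        exact (rpow_key_estimate k hk hm0).2
      -- upper sum bound: (k-1) * S ≤ (n-1)^(1-k) - (M-1)^(1-k)
      have hS_high : (k - 1) * S ≤ ((n : ℝ) - 1) ^ (1 - k) - ((M : ℝ) - 1) ^ (1 - k) := by
        rw [← htel2, hSdef, Finset.mul_sum]
        refine Finset.sum_le_sum fun m hm => ?_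
        have hm2 : (2:ℝ) ≤ (m : ℝ) := by exact_mod_cast (hmem m hm).1
        have hm1 : (0:ℝ) < (m : ℝ) - 1 := by linarith
        have h := (rpow_key_estimate k hk hm1).1
        have e1 : (m : ℝ) - 1 + 1 = (m : ℝ) := by ring
        rw [e1] at h
        exact h
      -- bounds on x n - x M
      have hx_low : (l - ε') * S ≤ x n - x M := by
        rw [← htelx, hSdef, Finset.mul_sum]
        refine Finset.sum_le_sum fun m hm => ?_
        have hm2 : (2:ℝ) ≤ (m : ℝ) := by exact_mod_cast (hmem m hm).1
        have hm0 : (0:ℝ) < (m : ℝ) := by linarith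
        have hd := hN₁ m (hmem m hm).2
        rw [Real.dist_eq, abs_lt] at hd
        have hmk : (0:ℝ) < (m : ℝ) ^ k := Real.rpow_pos_of_pos hm0 k
        have hinv : (m : ℝ) ^ (-k) * (m : ℝ) ^ k = 1 := by
          rw [← Real.rpow_add hm0]; norm_num
        have h1 : (l - ε') ≤ (m : ℝ) ^ k * (x m - x (m + 1)) := by linarith [hd.1]
        have h2' : (m : ℝ) ^ (-k) * (l - ε') ≤ (m : ℝ) ^ (-k) * ((m : ℝ) ^ k * (x m - x (m + 1))) :=
          mul_le_mul_of_nonneg_left h1 (Real.rpow_nonneg hm0.le _)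
        rw [← mul_assoc, hinv, one_mul] at h2'
        linarith [h2']
      have hx_high : x n - x M ≤ (l + ε') * S := by
        rw [← htelx, hSdef, Finset.mul_sum]
        refine Finset.sum_le_sum fun m hm => ?_
        have hm2 : (2:ℝ) ≤ (m : ℝ) := by exact_mod_cast (hmem m hm).1
        have hm0 : (0:ℝ) < (m : ℝ) := by linarith
        have hd := hN₁ m (hmem m hm).2
        rw [Real.dist_eq, abs_lt] at hd
        have hinv : (m : ℝ) ^ (-k) * (m : ℝ) ^ k = 1 := by
          rw [← Real.rpow_add hm0]; norm_num
        have h1 : (m : ℝ) ^ k * (x m - x (m + 1)) ≤ (l + ε') := by linarith [hd.2]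
        have h2' : (m : ℝ) ^ (-k) * ((m : ℝ) ^ k * (x m - x (m + 1))) ≤ (m : ℝ) ^ (-k) * (l + ε') :=
          mul_le_mul_of_nonneg_left h1 (Real.rpow_nonneg hm0.le _)
        rw [← mul_assoc, hinv, one_mul] at h2'
        linarith [h2']
      -- slo ≤ S ≤ shi
      set slo : ℝ := ((n : ℝ) ^ (1 - k) - (M : ℝ) ^ (1 - k)) / (k - 1) with hsldef
      set shi : ℝ := (((n : ℝ) - 1) ^ (1 - k) - ((M : ℝ) - 1) ^ (1 - k)) / (k - 1) with hshdef
      have hSl : slo ≤ S := by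
        rw [hsldef, div_le_iff₀ hK]
        linarith [hS_low]
      have hSu : S ≤ shi := by
        rw [hshdef, le_div_iff₀ hK]
        linarith [hS_high]
      -- shi - slo ≤ (n-1)^(-k)
      have hD : shi - slo ≤ ((n : ℝ) - 1) ^ (-k) := by
        have hkey1 := (rpow_key_estimate k hk (by linarith : (0:ℝ) < (n : ℝ) - 1)).2
        have e1 : (n : ℝ) - 1 + 1 = (n : ℝ) := by ring
        rw [e1] at hkey1
        -- also (M-1)^(1-k) ≥ M^(1-k), i.e. telescoping term at M is ≥ 0
        have hM2 : (2:ℝ) ≤ (M : ℝ) := by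
          have : (n:ℝ) ≤ (M:ℝ) := by exact_mod_cast hnM
          linarith
        have hkey2 := (rpow_key_estimate k hk (by linarith : (0:ℝ) < (M : ℝ) - 1)).1
        have e2 : (M : ℝ) - 1 + 1 = (M : ℝ) := by ring
        rw [e2] at hkey2
        have hMk : (0:ℝ) ≤ (M : ℝ) ^ (-k) := Real.rpow_nonneg (by linarith) _
        have hMterm : (0:ℝ) ≤ ((M : ℝ) - 1) ^ (1 - k) - (M : ℝ) ^ (1 - k) := by
          have := mul_nonneg hK.le hMk
          linarith
        rw [hshdef, hsldef, div_sub_div_same, div_le_iff₀ hK]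
        linarith [hkey1, hMterm]
      -- shi ≤ (n-1)^(1-k)/(k-1)
      have hshi : shi ≤ ((n : ℝ) - 1) ^ (1 - k) / (k - 1) := by
        rw [hshdef, div_le_div_iff₀ hK hK]
        have : (0:ℝ) ≤ ((M : ℝ) - 1) ^ (1 - k) := by
          have hM2 : (2:ℝ) ≤ (M : ℝ) := by
            have : (n:ℝ) ≤ (M:ℝ) := by exact_mod_cast hnM
            linarith
          exact Real.rpow_nonneg (by linarith) _
        have h2 := mul_nonneg this hK.le
        linarith
      -- 0 ≤ S
      have hS0 : 0 ≤ S := by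
        refine Finset.sum_nonneg fun m hm => ?_
        have hm2 : (2:ℝ) ≤ (m : ℝ) := by exact_mod_cast (hmem m hm).1
        exact Real.rpow_nonneg (by linarith) _
      -- combine
      rw [abs_le]
      constructor
      · -- lower: -(E) ≤ x n - x M - l * slo
        have e1 : -l * (S - slo) ≤ |l| * (S - slo) :=
          mul_le_mul_of_nonneg_right (neg_le_abs l) (by linarith)
        have e2 : |l| * (S - slo) ≤ |l| * (((n : ℝ) - 1) ^ (-k)) := by
          refine mul_le_mul_of_nonneg_left ?_ (abs_nonneg l)
          linarith
        have e3 := e1.trans e2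
        have e4 : ε' * S ≤ ε' * shi := mul_le_mul_of_nonneg_left hSu hε'pos.le
        have e5 : ε' * shi ≤ ε' * (((n : ℝ) - 1) ^ (1 - k) / (k - 1)) :=
          mul_le_mul_of_nonneg_left hshi hε'pos.le
        rw [hEdef]
        linarith [hx_low, e3, e4, e5]
      · have e1 : l * (S - slo) ≤ |l| * (S - slo) :=
          mul_le_mul_of_nonneg_right (le_abs_self l) (by linarith)
        have e2 : |l| * (S - slo) ≤ |l| * (((n : ℝ) - 1) ^ (-k)) := by
          refine mul_le_mul_of_nonneg_left ?_ (abs_nonneg l)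
          linarith
        have e3 := e1.trans e2
        have e4 : ε' * S ≤ ε' * shi := mul_le_mul_of_nonneg_left hSu hε'pos.le
        have e5 : ε' * shi ≤ ε' * (((n : ℝ) - 1) ^ (1 - k) / (k - 1)) :=
          mul_le_mul_of_nonneg_left hshi hε'pos.le
        rw [hEdef]
        linarith [hx_high, e3, e4, e5]
    -- Step 2: take M → ∞
    have hgM : Tendsto
        (fun M : ℕ => |x n - x M - l * (((n : ℝ) ^ (1 - k) - (M : ℝ) ^ (1 - k)) / (k - 1))|)
        atTop (𝓝 |x n - X - l * ((n : ℝ) ^ (1 - k) / (k - 1))|) := by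
      have h1 : Tendsto (fun M : ℕ => x n - x M) atTop (𝓝 (x n - X)) :=
        tendsto_const_nhds.sub hx
      have h2 : Tendsto (fun M : ℕ => l * (((n : ℝ) ^ (1 - k) - (M : ℝ) ^ (1 - k)) / (k - 1)))
          atTop (𝓝 (l * (((n : ℝ) ^ (1 - k) - 0) / (k - 1)))) :=
        (((tendsto_const_nhds.sub hM0).div_const (k - 1)).const_mul l)
      rw [sub_zero] at h2
      exact (h1.sub h2).abs
    have hstep2 : |x n - X - l * ((n : ℝ) ^ (1 - k) / (k - 1))| ≤ E :=
      le_of_tendsto hgM (eventually_atTop.mpr ⟨n, step1⟩)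
    -- Step 3: multiply by n^(k-1)
    have hnk : (0:ℝ) < (n : ℝ) ^ (k - 1) := Real.rpow_pos_of_pos hn0 _
    have hid : (n : ℝ) ^ (k - 1) * (n : ℝ) ^ (1 - k) = 1 := by
      rw [← Real.rpow_add hn0]; norm_num
    have key3 : (n : ℝ) ^ (k - 1) * (x n - X) - l / (k - 1)
        = (n : ℝ) ^ (k - 1) * (x n - X - l * ((n : ℝ) ^ (1 - k) / (k - 1))) := by
      have h : (n : ℝ) ^ (k - 1) * (l * ((n : ℝ) ^ (1 - k) / (k - 1))) = l / (k - 1) := by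
        rw [show (n : ℝ) ^ (k - 1) * (l * ((n : ℝ) ^ (1 - k) / (k - 1)))
            = l * ((n : ℝ) ^ (k - 1) * (n : ℝ) ^ (1 - k)) / (k - 1) by ring, hid, mul_one]
      linear_combination h
    rw [Real.dist_eq, key3, abs_mul, abs_of_pos hnk]
    have hfinal : (n : ℝ) ^ (k - 1) * |x n - X - l * ((n : ℝ) ^ (1 - k) / (k - 1))|
        ≤ (n : ℝ) ^ (k - 1) * E := mul_le_mul_of_nonneg_left hstep2 hnk.le
    have hEexp : (n : ℝ) ^ (k - 1) * E
        = |l| * ((n : ℝ) ^ (k - 1) * ((n : ℝ) - 1) ^ (-k))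
          + ε' * ((n : ℝ) ^ (k - 1) * ((n : ℝ) - 1) ^ (1 - k)) / (k - 1) := by
      rw [hEdef]; ring
    have hterm2 : ε' * ((n : ℝ) ^ (k - 1) * ((n : ℝ) - 1) ^ (1 - k)) / (k - 1)
        ≤ ε' * 2 / (k - 1) := by
      have hmul : ε' * ((n : ℝ) ^ (k - 1) * ((n : ℝ) - 1) ^ (1 - k)) ≤ ε' * 2 :=
        mul_le_mul_of_nonneg_left hBe.le hε'pos.le
      have hinv : (0:ℝ) ≤ (k - 1)⁻¹ := inv_nonneg.mpr hK.le
      have := mul_le_mul_of_nonneg_right hmul hinv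
      simpa [div_eq_mul_inv] using this
    have hε'val : ε' * 2 / (k - 1) = ε / 2 := by
      rw [hε'def]; field_simp; ring
    calc (n : ℝ) ^ (k - 1) * |x n - X - l * ((n : ℝ) ^ (1 - k) / (k - 1))|
        ≤ (n : ℝ) ^ (k - 1) * E := hfinal
      _ = |l| * ((n : ℝ) ^ (k - 1) * ((n : ℝ) - 1) ^ (-k))
          + ε' * ((n : ℝ) ^ (k - 1) * ((n : ℝ) - 1) ^ (1 - k)) / (k - 1) := hEexp
      _ < ε / 4 + ε / 2 := by
          have := hterm2.trans_eq hε'val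
          linarith [hAe]
      _ < ε := by linarith
  exact eventually_atTop.mp hev
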